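/- For any probability distribution p on a finite set I ⊂ ℝ and any t ∈ ℝ, |Σ_{s∈I} p(s)e^{its}| ≤ exp( − Σ_{(s,s')∈I×I} p(s)p(s') sin²((s−s')t/2) ). (Indeed |Σ_s p(s)e^{its}|² = Σ_{(s,s')} p(s)p(s') cos((s−s')t), and x ≤ e^{(x²−1)/2} for x > 0.) -/

import Mathlib

open Finset

/-- For any probability distribution `p` on a finite set `I ⊂ ℝ`
and any `t ∈ ℝ`,
`|Σ_{s∈I} p(s)e^{its}| ≤ exp(−Σ_{(s,s')∈I×I} p(s)p(s') sin²((s−s')t/2))`. -/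
theorem charfun_abs_le_exp_sin_sq
    (I : Finset ℝ) (p : ℝ → ℝ)
    (hp0 : ∀ s ∈ I, 0 ≤ p s) (hp1 : ∑ s ∈ I, p s = 1) (t : ℝ) :
    ‖∑ s ∈ I, (p s : ℂ) * Complex.exp (Complex.I * t * s)‖ ≤
      Real.exp (- ∑ s ∈ I, ∑ s' ∈ I, p s * p s' * Real.sin ((s - s') * t / 2) ^ 2) := by
  set z : ℂ := ∑ s ∈ I, (p s : ℂ) * Complex.exp (Complex.I * t * s) with hz
  set S : ℝ := ∑ s ∈ I, ∑ s' ∈ I, p s * p s' * Real.sin ((s - s') * t / 2) ^ 2 with hS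
  have key : z * (starRingEnd ℂ) z
      = ∑ s ∈ I, ∑ s' ∈ I, ((p s * p s' : ℝ) : ℂ)
          * Complex.exp (((((s - s') * t : ℝ)) : ℂ) * Complex.I) := by
    rw [hz, map_sum, Finset.sum_mul_sum]
    refine Finset.sum_congr rfl fun s _ => Finset.sum_congr rfl fun s' _ => ?_
    rw [map_mul, ← Complex.exp_conj, Complex.conj_ofReal]
    have hconj : (starRingEnd ℂ) (Complex.I * t * s') = -(Complex.I * t * s') := by
      simp [Complex.conj_I, Complex.conj_ofReal]
    rw [hconj, mul_mul_mul_comm, ← Complex.exp_add]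
    push_cast
    ring_nf
  have hsq : ‖z‖ ^ 2
      = ∑ s ∈ I, ∑ s' ∈ I, p s * p s' * Real.cos ((s - s') * t) := by
    have h1 : (‖z‖) ^ 2 = (z * (starRingEnd ℂ) z).re := by
      rw [Complex.mul_conj]
      simp [Complex.sq_norm]
    rw [h1, key, Complex.re_sum]
    refine Finset.sum_congr rfl fun s _ => ?_
    rw [Complex.re_sum]
    refine Finset.sum_congr rfl fun s' _ => ?_
    rw [Complex.re_ofReal_mul, Complex.exp_ofReal_mul_I_re]
  have hcos : ∀ s s' : ℝ, Real.cos ((s - s') * t)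
      = 1 - 2 * Real.sin ((s - s') * t / 2) ^ 2 := by
    intro s s'
    have := Real.cos_sq ((s - s') * t / 2)
    have h2 : Real.sin ((s - s') * t / 2) ^ 2
        = 1 - Real.cos ((s - s') * t / 2) ^ 2 := Real.sin_sq _
    rw [h2, this]
    rw [show 2 * ((s - s') * t / 2) = (s - s') * t by ring]
    ring
  have hsum1 : ∑ s ∈ I, ∑ s' ∈ I, p s * p s' = 1 := by
    rw [← Finset.sum_mul_sum, hp1, one_mul]
  have hsq2 : ‖z‖ ^ 2 = 1 - 2 * S := by
    rw [hsq]
    have : ∑ s ∈ I, ∑ s' ∈ I, p s * p s' * Real.cos ((s - s') * t)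
        = (∑ s ∈ I, ∑ s' ∈ I, p s * p s')
          - 2 * ∑ s ∈ I, ∑ s' ∈ I, p s * p s' * Real.sin ((s - s') * t / 2) ^ 2 := by
      rw [Finset.mul_sum, ← Finset.sum_sub_distrib]
      refine Finset.sum_congr rfl fun s _ => ?_
      rw [Finset.mul_sum, ← Finset.sum_sub_distrib]
      refine Finset.sum_congr rfl fun s' _ => ?_
      rw [hcos]
      ring
    rw [this, hsum1, hS]
  have hA : 0 ≤ ‖z‖ := norm_nonneg z
  have hE : (0:ℝ) < Real.exp (-S) := Real.exp_pos _
  have h1 : ‖z‖ ^ 2 ≤ Real.exp (-S) ^ 2 := by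
    rw [hsq2, sq, ← Real.exp_add]
    have h := Real.add_one_le_exp (-(2 * S))
    have heq : -S + -S = -(2 * S) := by ring
    rw [heq]; linarith
  nlinarith [h1, hA, hE]
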